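/- Let G be an n-vertex graph, t a positive integer, and m ≤ n. Sample t vertices independently uniformly at random and let U be the set of vertices with no neighbour among the samples. Then the expected number of k-element subsets of U whose common non-neighbourhood has size less than m is at most C(n, k) · (m/n)^t. -/

import Mathlib

open Finset
open scoped Classical

noncomputable def sampleU {V : Type*} [Fintype V] (G : SimpleGraph V) {t : ℕ}
    (f : Fin t → V) : Finset V :=
  Finset.univ.filter fun w => ∀ j : Fin t, ¬ G.Adj w (f j)

/-- The number of vertices of `G` adjacent to no vertex of `X` (the common
non-neighbourhood of `X`). -/
noncomputable def numNonNbrs {V : Type*} [Fintype V] (G : SimpleGraph V) (X : Finset V) : ℕ :=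
  (Finset.univ.filter fun w => ∀ x ∈ X, ¬ G.Adj w x).card

/-- Sample `t` vertices independently and uniformly at random and let `U` be the set of
vertices with no sampled neighbour. The expected number of `k`-element subsets of `U` whose
common non-neighbourhood has size less than `m` is at most `C(n,k) · (m/n)^t`. -/
theorem stmt14 {V : Type*} [Fintype V] (G : SimpleGraph V) (t k m : ℕ)
    (ht : 0 < t) (hm : m ≤ Fintype.card V) :
    (∑ f : Fin t → V,
        ((Finset.univ.filter fun X : Finset V =>
            X.card = k ∧ X ⊆ sampleU G f ∧ numNonNbrs G X < m).card : ℝ)) /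
        (Fintype.card V : ℝ) ^ t ≤
      ((Fintype.card V).choose k : ℝ) * ((m : ℝ) / (Fintype.card V : ℝ)) ^ t := by
  classical
  set n := Fintype.card V with hn
  -- key natural number bound
  have key : (∑ f : Fin t → V,
        ((Finset.univ.filter fun X : Finset V =>
            X.card = k ∧ X ⊆ sampleU G f ∧ numNonNbrs G X < m).card))
      ≤ n.choose k * m ^ t := by
    have h1 : (∑ f : Fin t → V,
        ((Finset.univ.filter fun X : Finset V =>
            X.card = k ∧ X ⊆ sampleU G f ∧ numNonNbrs G X < m).card))
        = ∑ X : Finset V, ∑ f : Fin t → V,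
            (if X.card = k ∧ X ⊆ sampleU G f ∧ numNonNbrs G X < m then 1 else 0) := by
      rw [Finset.sum_comm]
      refine Finset.sum_congr rfl fun f _ => ?_
      rw [Finset.card_filter]
    rw [h1]
    have h2 : ∀ X : Finset V,
        (∑ f : Fin t → V,
            (if X.card = k ∧ X ⊆ sampleU G f ∧ numNonNbrs G X < m then 1 else 0))
        ≤ (if X.card = k then m ^ t else 0) := by
      intro X
      by_cases hk : X.card = k
      · rw [if_pos hk]
        have hsub : (Finset.univ.filter fun f : Fin t → V =>
            X.card = k ∧ X ⊆ sampleU G f ∧ numNonNbrs G X < m)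
            ⊆ Fintype.piFinset (fun _ : Fin t =>
              Finset.univ.filter fun w => ∀ x ∈ X, ¬ G.Adj w x) := by
          intro f hf
          simp only [Finset.mem_filter, Finset.mem_univ, true_and] at hf
          rw [Fintype.mem_piFinset]
          intro j
          simp only [Finset.mem_filter, Finset.mem_univ, true_and]
          intro x hx
          have := hf.2.1 hx
          simp only [sampleU, Finset.mem_filter, Finset.mem_univ, true_and] at this
          exact fun h => this j h.symm
        by_cases hnm : numNonNbrs G X < m
        · calc (∑ f : Fin t → V,
              (if X.card = k ∧ X ⊆ sampleU G f ∧ numNonNbrs G X < m then 1 else 0))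
              = (Finset.univ.filter fun f : Fin t → V =>
                  X.card = k ∧ X ⊆ sampleU G f ∧ numNonNbrs G X < m).card := by
                rw [Finset.card_filter]
            _ ≤ (Fintype.piFinset (fun _ : Fin t =>
                  Finset.univ.filter fun w => ∀ x ∈ X, ¬ G.Adj w x)).card :=
                Finset.card_le_card hsub
            _ = (numNonNbrs G X) ^ t := by
                rw [Fintype.card_piFinset]
                simp [numNonNbrs]
            _ ≤ m ^ t := Nat.pow_le_pow_left (le_of_lt hnm) t
        · have : ∀ f : Fin t → V,
              (if X.card = k ∧ X ⊆ sampleU G f ∧ numNonNbrs G X < m then 1 else 0) = 0 := by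
            intro f; simp [hnm]
          simp only [this, Finset.sum_const_zero]
          exact Nat.zero_le _
      · have : ∀ f : Fin t → V,
            (if X.card = k ∧ X ⊆ sampleU G f ∧ numNonNbrs G X < m then 1 else 0) = 0 := by
          intro f; simp [hk]
        simp [this, hk]
    calc (∑ X : Finset V, ∑ f : Fin t → V,
            (if X.card = k ∧ X ⊆ sampleU G f ∧ numNonNbrs G X < m then 1 else 0))
        ≤ ∑ X : Finset V, (if X.card = k then m ^ t else 0) :=
          Finset.sum_le_sum fun X _ => h2 X
      _ = (Finset.univ.filter fun X : Finset V => X.card = k).card * m ^ t := by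
          rw [← Finset.sum_filter, Finset.sum_const, smul_eq_mul]
      _ = n.choose k * m ^ t := by
          congr 1
          have : (Finset.univ.filter fun X : Finset V => X.card = k)
              = Finset.powersetCard k (Finset.univ : Finset V) := by
            ext X
            simp [Finset.mem_powersetCard]
          rw [this, Finset.card_powersetCard, Finset.card_univ]
  -- pass to reals
  by_cases hn0 : n = 0
  · have hV : IsEmpty V := by
      rw [← Fintype.card_eq_zero_iff]; exact hn0
    have hft : IsEmpty (Fin t → V) := by
      exact Function.isEmpty (α := Fin t → V) (f := fun f => f ⟨0, ht⟩)
    rw [Finset.sum_of_isEmpty]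
    rw [hn0]
    simp
    positivity
  · have hnpos : (0 : ℝ) < (n : ℝ) := by positivity
    have hcast : (∑ f : Fin t → V,
        ((Finset.univ.filter fun X : Finset V =>
            X.card = k ∧ X ⊆ sampleU G f ∧ numNonNbrs G X < m).card : ℝ))
        ≤ (n.choose k : ℝ) * (m : ℝ) ^ t := by
      have := key
      calc (∑ f : Fin t → V,
          ((Finset.univ.filter fun X : Finset V =>
              X.card = k ∧ X ⊆ sampleU G f ∧ numNonNbrs G X < m).card : ℝ))
          = ((∑ f : Fin t → V,
            ((Finset.univ.filter fun X : Finset V =>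
              X.card = k ∧ X ⊆ sampleU G f ∧ numNonNbrs G X < m).card) : ℕ) : ℝ) := by
            push_cast; ring_nf
        _ ≤ ((n.choose k * m ^ t : ℕ) : ℝ) := by exact_mod_cast key
        _ = (n.choose k : ℝ) * (m : ℝ) ^ t := by push_cast; ring
    rw [div_le_iff₀ (by positivity)]
    calc (∑ f : Fin t → V,
        ((Finset.univ.filter fun X : Finset V =>
            X.card = k ∧ X ⊆ sampleU G f ∧ numNonNbrs G X < m).card : ℝ))
        ≤ (n.choose k : ℝ) * (m : ℝ) ^ t := hcast
      _ = (n.choose k : ℝ) * ((m : ℝ) / (n : ℝ)) ^ t * (n : ℝ) ^ t := by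
          rw [div_pow, mul_assoc, div_mul_cancel₀ _ (pow_ne_zero t hnpos.ne')]
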